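/- With u^ξ = (Id + ξΦ)(u⁺) as above and t the line spanned by E_{11}+...+E_{n−1,n−1}−(n−1)E_{nn}, one has [t, u^ξ] ⊆ u^{−ξ} for every ξ ∈ R. Consequently, for ξ ≠ 0, the subspace h ⊕ u^ξ ⊕ t is not closed under the Lie bracket. -/

import Mathlib

open scoped Matrix

/-- The degenerate diagonal matrix `diag(1,…,1,−1,…,−1,0)` (`p` ones, then `−1`s, then `0` in
the last slot), representing the standard form of signature `(p, q−1)` on the first `n−1`
coordinates of `ℝ^n`. -/
noncomputable def Jmat (n p : ℕ) : Matrix (Fin n) (Fin n) ℝ :=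
  Matrix.diagonal fun i => if (i : ℕ) = n - 1 then 0 else if (i : ℕ) < p then 1 else -1

/-- The subalgebra `h` of `sl_n(ℝ)`: matrices `[[A,0],[0,0]]` with `A ∈ so(p, q−1)`. -/
noncomputable def hSet (n p : ℕ) : Set (Matrix (Fin n) (Fin n) ℝ) :=
  {X | Xᵀ * Jmat n p + Jmat n p * X = 0 ∧
    ∀ i j : Fin n, ((i : ℕ) = n - 1 ∨ (j : ℕ) = n - 1) → X i j = 0}

/-- `u⁺ = span{E_{in} : 1 ≤ i ≤ n−1}`: matrices supported on the last column, off the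
diagonal. -/
def uPlus (n : ℕ) : Set (Matrix (Fin n) (Fin n) ℝ) :=
  {X | ∀ i j : Fin n, ¬((j : ℕ) = n - 1 ∧ (i : ℕ) ≠ n - 1) → X i j = 0}

/-- `u⁻ = span{E_{ni} : 1 ≤ i ≤ n−1}`: matrices supported on the last row, off the
diagonal. -/
def uMinus (n : ℕ) : Set (Matrix (Fin n) (Fin n) ℝ) :=
  {X | ∀ i j : Fin n, ¬((i : ℕ) = n - 1 ∧ (j : ℕ) ≠ n - 1) → X i j = 0}

/-- The generator `E₁₁ + ⋯ + E_{n−1,n−1} − (n−1)E_{nn}` of the one-dimensional subspace `t`. -/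
noncomputable def tGen (n : ℕ) : Matrix (Fin n) (Fin n) ℝ :=
  Matrix.diagonal fun i => if (i : ℕ) = n - 1 then -((n : ℝ) - 1) else 1

/-- The line `t = ℝ·(E₁₁ + ⋯ + E_{n−1,n−1} − (n−1)E_{nn})`. -/
noncomputable def tSet (n : ℕ) : Set (Matrix (Fin n) (Fin n) ℝ) :=
  {X | ∃ c : ℝ, X = c • tGen n}

/-- The map `Φ : u⁺ → u⁻` sending `E_{in} ↦ E_{ni}` for `i ≤ p` and `E_{in} ↦ −E_{ni}` for
`i > p` (indices `1 ≤ i ≤ n−1`). -/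
noncomputable def phiMap (n p : ℕ) (X : Matrix (Fin n) (Fin n) ℝ) :
    Matrix (Fin n) (Fin n) ℝ :=
  Matrix.of fun i j =>
    if (i : ℕ) = n - 1 then
      if (j : ℕ) = n - 1 then 0 else (if (j : ℕ) < p then 1 else -1) * X j i
    else 0

/-- The subspace `u^ξ = (Id + ξΦ)(u⁺)`. -/
noncomputable def uXi (n p : ℕ) (ξ : ℝ) : Set (Matrix (Fin n) (Fin n) ℝ) :=
  {Z | ∃ Y ∈ uPlus n, Z = Y + ξ • phiMap n p Y}

/-- The sum `h ⊕ u ⊕ t` as a set of matrices. -/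
noncomputable def sumSet (n p : ℕ) (u : Set (Matrix (Fin n) (Fin n) ℝ)) :
    Set (Matrix (Fin n) (Fin n) ℝ) :=
  {X | ∃ A ∈ hSet n p, ∃ B ∈ u, ∃ C ∈ tSet n, X = A + B + C}

lemma aux_lie_entry (n : ℕ) (c : ℝ) (W : Matrix (Fin n) (Fin n) ℝ) (i j : Fin n) :
    (⁅c • tGen n, W⁆) i j =
      c * ((if (i : ℕ) = n - 1 then -((n : ℝ) - 1) else 1) -
        (if (j : ℕ) = n - 1 then -((n : ℝ) - 1) else 1)) * W i j := by
  change (c • tGen n * W - W * (c • tGen n)) i j = _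
  simp only [Matrix.sub_apply, Matrix.smul_mul, Matrix.mul_smul, Matrix.smul_apply, tGen,
    Matrix.diagonal_mul, Matrix.mul_diagonal, smul_eq_mul]
  ring

/-- `[t, u^ξ] ⊆ u^{−ξ}` for every `ξ ∈ ℝ`; consequently, for `ξ ≠ 0` the
subspace `h ⊕ u^ξ ⊕ t` is not closed under the Lie bracket. -/
theorem t_bracket_uXi (n p q : ℕ) (hp : 1 ≤ p) (hq : 2 ≤ q) (hn : p + q = n) (ξ : ℝ) :
    (∀ Z ∈ tSet n, ∀ W ∈ uXi n p ξ, ⁅Z, W⁆ ∈ uXi n p (-ξ)) ∧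
    (ξ ≠ 0 → ¬(∀ X ∈ sumSet n p (uXi n p ξ), ∀ Y ∈ sumSet n p (uXi n p ξ),
      ⁅X, Y⁆ ∈ sumSet n p (uXi n p ξ))) := by
  constructor
  · rintro Z ⟨c, rfl⟩ W ⟨Y, hY, rfl⟩
    refine ⟨(c * n) • Y, fun i j h => by simp [Matrix.smul_apply, hY i j h], ?_⟩
    ext i j
    rw [aux_lie_entry]
    simp only [Matrix.add_apply, Matrix.smul_apply, phiMap, Matrix.of_apply, smul_eq_mul]
    by_cases hi : (i : ℕ) = n - 1 <;> by_cases hj : (j : ℕ) = n - 1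
    · have hYij : Y i j = 0 := hY i j (by simp [hi])
      simp [hi, hj, hYij]
    · have hYij : Y i j = 0 := hY i j (by simp [hj])
      simp only [hi, hj, if_true, if_false, hYij]
      by_cases hjp : (j : ℕ) < p <;> simp [hjp] <;> ring
    · simp only [hi, hj, if_true, if_false]
      ring
    · have hYij : Y i j = 0 := hY i j (by simp [hj])
      simp [hi, hj, hYij]
  · intro hξ hcl
    have hn3 : 3 ≤ n := by omega
    set i0 : Fin n := ⟨0, by omega⟩ with hi0
    set iN : Fin n := ⟨n - 1, by omega⟩ with hiN
    have hi0v : (i0 : ℕ) = 0 := rfl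
    have hiNv : (iN : ℕ) = n - 1 := rfl
    have hi0N : (i0 : ℕ) ≠ n - 1 := by omega
    have h0N : (0 : ℕ) ≠ n - 1 := by omega
    have h0h : (0 : Matrix (Fin n) (Fin n) ℝ) ∈ hSet n p := by
      constructor
      · simp
      · intro i j _; simp
    have hphi0 : phiMap n p 0 = 0 := by
      ext i j; simp [phiMap]
    have h0u : (0 : Matrix (Fin n) (Fin n) ℝ) ∈ uXi n p ξ :=
      ⟨0, fun i j _ => rfl, by simp [hphi0]⟩
    set E : Matrix (Fin n) (Fin n) ℝ :=
      Matrix.of fun i j => if i = i0 ∧ j = iN then 1 else 0 with hE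
    have hEu : E ∈ uPlus n := by
      intro i j h
      simp only [hE, Matrix.of_apply, ite_eq_right_iff, one_ne_zero, imp_false, not_and]
      intro hii hjj
      exact absurd ⟨by rw [hjj], by rw [hii]; exact hi0N⟩ h
    have hX1 : tGen n ∈ sumSet n p (uXi n p ξ) :=
      ⟨0, h0h, 0, h0u, tGen n, ⟨1, by simp⟩, by simp⟩
    have hX2 : E + ξ • phiMap n p E ∈ sumSet n p (uXi n p ξ) :=
      ⟨0, h0h, E + ξ • phiMap n p E, ⟨E, hEu, rfl⟩, 0, ⟨0, by simp⟩, by simp⟩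
    obtain ⟨A, hA, W, ⟨Y, hY, rfl⟩, C, ⟨c, rfl⟩, heq⟩ := hcl _ hX1 _ hX2
    have hne : i0 ≠ iN := fun h => hi0N (by rw [h])
    have htg : (1 : ℝ) • tGen n = tGen n := one_smul _ _
    -- entry helpers for E and phiMap E
    have hE0N : E i0 iN = 1 := by simp [hE]
    have hEN0 : E iN i0 = 0 := by simp [hE, hne, Ne.symm hne]
    have hPE0N : phiMap n p E i0 iN = 0 := by simp [phiMap, hi0v, hi0N, h0N]
    have hPEN0 : phiMap n p E iN i0 = 1 := by
      simp [phiMap, hiNv, hi0v, hi0N, h0N, hE0N, Nat.lt_of_lt_of_le Nat.zero_lt_one hp]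
    have hPY0N : phiMap n p Y i0 iN = 0 := by simp [phiMap, hi0v, hi0N, h0N]
    have hPYN0 : phiMap n p Y iN i0 = Y i0 iN := by
      simp [phiMap, hiNv, hi0v, hi0N, h0N, Nat.lt_of_lt_of_le Nat.zero_lt_one hp]
    have hYN0 : Y iN i0 = 0 := hY iN i0 (by simp [hi0v, hi0N, h0N])
    have hA0N : A i0 iN = 0 := hA.2 i0 iN (Or.inr hiNv)
    have hAN0 : A iN i0 = 0 := hA.2 iN i0 (Or.inl hiNv)
    have hC0N : (c • tGen n) i0 iN = 0 := by
      simp [tGen, Matrix.diagonal_apply_ne _ hne]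
    have hCN0 : (c • tGen n) iN i0 = 0 := by
      simp [tGen, Matrix.diagonal_apply_ne _ (Ne.symm hne)]
    have heq1 := congrFun (congrFun heq i0) iN
    have heq2 := congrFun (congrFun heq iN) i0
    rw [← htg, aux_lie_entry] at heq1 heq2
    simp only [Matrix.add_apply, Matrix.smul_apply, smul_eq_mul, hi0v, hiNv, hi0N,
      if_false, if_true, hE0N, hEN0, hPE0N, hPEN0, hPY0N, hPYN0, hYN0, hA0N, hAN0,
      hC0N, hCN0, if_neg hi0N, h0N] at heq1 heq2
    have ht1 : tGen n i0 iN = 0 := Matrix.diagonal_apply_ne _ hne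
    have ht2 : tGen n iN i0 = 0 := Matrix.diagonal_apply_ne _ (Ne.symm hne)
    rw [ht1] at heq1
    rw [ht2] at heq2
    have hYv : Y i0 iN = (n : ℝ) := by linarith
    rw [hYv] at heq2
    have hz : (n : ℝ) * ξ = 0 := by nlinarith [heq2]
    have hn0 : (n : ℝ) ≠ 0 := Nat.cast_ne_zero.2 (by omega)
    rcases mul_eq_zero.1 hz with h | h
    · exact hn0 h
    · exact hξ h
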